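/- Let A be a self-adjoint operator in ℋ, p ∈ ℕ, and B ∈ C_{p−1}(A) a Hermitian (bounded self-adjoint) operator; then A + B, with domain Dom(A), is self-adjoint. An operator-valued function X(t) ∈ B(ℋ), t ∈ ℝ, is in C_p(A) uniformly if and only if X(t) is in C_p(A+B) uniformly. -/

import Mathlib

set_option linter.unusedSectionVars false
set_option linter.unusedVariables false
set_option maxHeartbeats 1600000

open scoped ComplexOrder
open Classical

variable {ℋ : Type*} [NormedAddCommGroup ℋ] [InnerProductSpace ℂ ℋ] [CompleteSpace ℋ]

/-- The everywhere-defined extension (by `0` outside the domain) of an unbounded operator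
`Aop` with domain the submodule `D`. -/
noncomputable def Aext (D : Submodule ℂ ℋ) (Aop : ↥D →ₗ[ℂ] ℋ) (ψ : ℋ) : ℋ :=
  if h : ψ ∈ D then Aop ⟨ψ, h⟩ else 0

/-- `Dom(A^n)`: the set of vectors to which `A` can be applied `n` times. -/
def domPow (D : Submodule ℂ ℋ) (Aop : ↥D →ₗ[ℂ] ℋ) (n : ℕ) : Set ℋ :=
  {ψ : ℋ | ∀ k, k < n → (Aext D Aop)^[k] ψ ∈ D}

/-- The sesquilinear form `α_n(ξ,η) = Σ_{k=0}^{n} C(n,k)(−1)^k ⟨X A^k ξ, A^{n−k} η⟩`,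
defined (meaningfully) on `Dom(A^n)`. -/
noncomputable def commForm (D : Submodule ℂ ℋ) (Aop : ↥D →ₗ[ℂ] ℋ)
    (X : ℋ →L[ℂ] ℋ) (n : ℕ) (ξ η : ℋ) : ℂ :=
  ∑ k ∈ Finset.range (n + 1),
    (n.choose k : ℂ) * (-1) ^ k *
      (inner ℂ (X ((Aext D Aop)^[k] ξ)) ((Aext D Aop)^[n - k] η) : ℂ)

/-- `ad_A^n X` exists in `B(ℋ)` and equals the bounded operator `Z`: the form `α_n` is
represented by `Z` on `Dom(A^n)`. -/
def AdExistsN (D : Submodule ℂ ℋ) (Aop : ↥D →ₗ[ℂ] ℋ) (n : ℕ) (X Z : ℋ →L[ℂ] ℋ) : Prop :=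
  ∀ ξ ∈ domPow D Aop n, ∀ η ∈ domPow D Aop n,
    commForm D Aop X n ξ η = (inner ℂ (Z ξ) η : ℂ)

/-- `X ∈ C_n(A)`: the multiple commutators `ad_A^k X` exist in `B(ℋ)` for `k = 0,…,n`. -/
def InCn (D : Submodule ℂ ℋ) (Aop : ↥D →ₗ[ℂ] ℋ) (n : ℕ) (X : ℋ →L[ℂ] ℋ) : Prop :=
  ∀ k, k ≤ n → ∃ Z : ℋ →L[ℂ] ℋ, AdExistsN D Aop k X Z

/-- Self-adjointness of the (in general unbounded) operator `Aop` with domain `D`: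
it is densely defined, symmetric, and its domain is maximal. -/
def IsSelfAdjointOp (D : Submodule ℂ ℋ) (Aop : ↥D →ₗ[ℂ] ℋ) : Prop :=
  Dense (D : Set ℋ) ∧
    (∀ u v : ↥D, (inner ℂ (Aop u) (v : ℋ) : ℂ) = inner ℂ (u : ℋ) (Aop v)) ∧
    ∀ v w : ℋ, (∀ u : ↥D, (inner ℂ (Aop u) v : ℂ) = inner ℂ (u : ℋ) w) → v ∈ D


/-- An operator-valued function `X(t)` is in `C_n(A)` uniformly:
`X(t) ∈ C_n(A)` for all `t` and `sup_t Σ_{k≤n} ‖ad_A^k X(t)‖ < ∞`. -/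
def InCnUniform (D : Submodule ℂ ℋ) (Aop : ↥D →ₗ[ℂ] ℋ) (n : ℕ)
    (X : ℝ → ℋ →L[ℂ] ℋ) : Prop :=
  ∃ c : ℝ, ∀ t : ℝ, ∀ k, k ≤ n → ∃ Z : ℋ →L[ℂ] ℋ, AdExistsN D Aop k (X t) Z ∧ ‖Z‖ ≤ c

section SA

variable {D : Submodule ℂ ℋ} {Aop : ↥D →ₗ[ℂ] ℋ}

lemma Aext_of_mem {ψ : ℋ} (h : ψ ∈ D) : Aext D Aop ψ = Aop ⟨ψ, h⟩ := dif_pos h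

lemma Aext_smul' {x : ℋ} (c : ℂ) (hx : x ∈ D) :
    Aext D Aop (c • x) = c • Aext D Aop x := by
  rw [Aext_of_mem hx, Aext_of_mem (D.smul_mem c hx), ← map_smul]
  rfl

lemma symm' (hA : IsSelfAdjointOp D Aop) {x y : ℋ} (hx : x ∈ D) (hy : y ∈ D) :
    (inner ℂ (Aext D Aop x) y : ℂ) = inner ℂ x (Aext D Aop y) := by
  rw [Aext_of_mem hx, Aext_of_mem hy]
  exact hA.2.1 ⟨x, hx⟩ ⟨y, hy⟩

lemma dense_eq (hA : IsSelfAdjointOp D Aop) {a b : ℋ}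
    (h : ∀ u ∈ D, (inner ℂ u a : ℂ) = inner ℂ u b) : a = b :=
  hA.1.eq_of_inner_right ℂ fun v hv => h v hv

lemma closed_graph (hA : IsSelfAdjointOp D Aop) (u : ℕ → ℋ) (hu : ∀ n, u n ∈ D) (x w : ℋ)
    (hx : Filter.Tendsto u Filter.atTop (nhds x))
    (hw : Filter.Tendsto (fun n => Aext D Aop (u n)) Filter.atTop (nhds w)) :
    x ∈ D ∧ Aext D Aop x = w := by
  have key : ∀ v : ↥D, (inner ℂ (Aop v) x : ℂ) = inner ℂ (v : ℋ) w := by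
    intro v
    have h1 : Filter.Tendsto (fun n => (inner ℂ (Aop v) (u n) : ℂ)) Filter.atTop
        (nhds (inner ℂ (Aop v) x)) := Filter.Tendsto.inner tendsto_const_nhds hx
    have h2 : Filter.Tendsto (fun n => (inner ℂ ((v : ℋ)) (Aext D Aop (u n)) : ℂ)) Filter.atTop
        (nhds (inner ℂ (v : ℋ) w)) := Filter.Tendsto.inner tendsto_const_nhds hw
    have heq : (fun n => (inner ℂ (Aop v) (u n) : ℂ)) =
        fun n => (inner ℂ ((v : ℋ)) (Aext D Aop (u n)) : ℂ) := by
      funext n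
      have := symm' hA v.2 (hu n)
      rwa [Aext_of_mem v.2] at this
    rw [heq] at h1
    exact tendsto_nhds_unique h1 h2
  have hxD : x ∈ D := hA.2.2 x w key
  refine ⟨hxD, dense_eq hA fun v hv => ?_⟩
  have h1 := symm' hA hv hxD
  have h2 := key ⟨v, hv⟩
  rw [Aext_of_mem hv] at h1
  rw [← h1]
  simpa using h2

/-- Existence of the regularizing family `J_m = iμ (A+iμ)⁻¹`, `μ = m+1`. -/
lemma J_exists (hA : IsSelfAdjointOp D Aop) (m : ℕ) :
    ∃ J : ℋ →L[ℂ] ℋ, (∀ y, J y ∈ D) ∧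
      (∀ ξ ∈ D, Aext D Aop (J ξ) = J (Aext D Aop ξ)) ∧
      (∀ y, ‖J y‖ ≤ ‖y‖) ∧
      (∀ ξ ∈ D, ‖J ξ - ξ‖ ≤ (1 / (m + 1)) * ‖Aext D Aop ξ‖) := by
  set μ : ℂ := Complex.I * ((m : ℂ) + 1) with hμ
  have hμconj : (starRingEnd ℂ) μ = -μ := by
    simp [hμ]
  have hμre : μ.re = 0 := by simp [hμ]
  have hμim : μ.im = (m : ℝ) + 1 := by simp [hμ]
  have hμnorm : ‖μ‖ = (m : ℝ) + 1 := by
    rw [hμ, norm_mul, Complex.norm_I, one_mul]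
    rw [show ((m : ℂ) + 1) = ((m + 1 : ℕ) : ℂ) by push_cast; ring]
    rw [Complex.norm_natCast]
    push_cast; ring
  set L : ↥D →ₗ[ℂ] ℋ := Aop + μ • D.subtype with hL
  have hLapp : ∀ u : ↥D, L u = Aop u + μ • (u : ℋ) := fun u => rfl
  have hreal : ∀ u : ↥D, (inner ℂ (Aop u) ((u : ℋ)) : ℂ).im = 0 := by
    intro u
    have h1 : (inner ℂ (Aop u) ((u : ℋ)) : ℂ) = inner ℂ ((u : ℋ)) (Aop u) := hA.2.1 u u
    have h2 : (inner ℂ ((u : ℋ)) (Aop u) : ℂ) = (starRingEnd ℂ) (inner ℂ (Aop u) ((u : ℋ)) : ℂ) :=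
      (inner_conj_symm _ _).symm
    have h3 := congrArg Complex.im (h1.trans h2)
    rw [Complex.conj_im] at h3
    linarith
  have hlow : ∀ u : ↥D, ((m : ℝ) + 1) * ‖(u : ℋ)‖ ≤ ‖L u‖ := by
    intro u
    have hsq : ‖L u‖ ^ 2 = ‖Aop u‖ ^ 2 + (((m : ℝ) + 1) * ‖(u : ℋ)‖) ^ 2 := by
      rw [hLapp]
      rw [@norm_add_sq ℂ]
      have hcross : (RCLike.re (inner ℂ (Aop u) (μ • (u : ℋ)) : ℂ)) = 0 := by
        rw [inner_smul_right]
        have h5 : (μ * (inner ℂ (Aop u) ((u : ℋ)) : ℂ)).re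
            = μ.re * (inner ℂ (Aop u) ((u : ℋ)) : ℂ).re
              - μ.im * (inner ℂ (Aop u) ((u : ℋ)) : ℂ).im := Complex.mul_re _ _
        rw [show (RCLike.re (μ * (inner ℂ (Aop u) ((u : ℋ)) : ℂ))) =
            (μ * (inner ℂ (Aop u) ((u : ℋ)) : ℂ)).re from rfl, h5, hreal u, hμre]
        ring
      rw [hcross, norm_smul, hμnorm]
      ring
    have h1 : (((m : ℝ) + 1) * ‖(u : ℋ)‖) ^ 2 ≤ ‖L u‖ ^ 2 := by
      rw [hsq]; nlinarith [sq_nonneg ‖Aop u‖]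
    have hnn : (0:ℝ) ≤ ((m : ℝ) + 1) * ‖(u : ℋ)‖ := by positivity
    nlinarith [norm_nonneg (L u)]
  have hinj : Function.Injective L := by
    intro u v huv
    have h0 : L (u - v) = 0 := by rw [map_sub, huv, sub_self]
    have h1 := hlow (u - v)
    rw [h0, norm_zero] at h1
    have hm0 : (0:ℝ) ≤ (m:ℝ) := Nat.cast_nonneg m
    have hn : ‖((u - v : ↥D) : ℋ)‖ = 0 := by
      nlinarith [norm_nonneg ((u - v : ↥D) : ℋ)]
    have h2 : ((u - v : ↥D) : ℋ) = 0 := norm_eq_zero.mp hn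
    have h3 : (u - v : ↥D) = 0 := by exact_mod_cast Subtype.ext h2
    exact sub_eq_zero.mp h3
  have hsurj : Function.Surjective L := by
    set S := LinearMap.range L with hS
    have hclosed : IsClosed (S : Set ℋ) := by
      apply IsSeqClosed.isClosed
      intro x y hx hlim
      have hx' : ∀ n, ∃ u : ↥D, L u = x n := fun n => LinearMap.mem_range.mp (hx n)
      choose u hu using hx'
      have hC : CauchySeq x := hlim.cauchySeq
      have hC' : CauchySeq (fun n => ((u n : ℋ))) := by
        rw [Metric.cauchySeq_iff] at hC ⊢
        intro ε hε
        obtain ⟨N, hN⟩ := hC ε hε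
        refine ⟨N, fun a ha b hb => ?_⟩
        have h1 := hlow (u a - u b)
        rw [map_sub, hu a, hu b] at h1
        have hcoe : ((u a - u b : ↥D) : ℋ) = (u a : ℋ) - (u b : ℋ) := rfl
        rw [hcoe] at h1
        have hm0 : (0:ℝ) ≤ (m:ℝ) := Nat.cast_nonneg m
        have h2 : ‖((u a : ℋ)) - (u b : ℋ)‖ ≤ ‖x a - x b‖ := by
          nlinarith [norm_nonneg ((u a : ℋ) - (u b : ℋ))]
        have hab := hN a ha b hb
        rw [dist_eq_norm] at hab ⊢
        exact lt_of_le_of_lt h2 hab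
      obtain ⟨w, hw⟩ := cauchySeq_tendsto_of_complete hC'
      have hAu : ∀ n, Aext D Aop ((u n : ℋ)) = x n - μ • ((u n : ℋ)) := by
        intro n
        rw [Aext_of_mem (u n).2]
        rw [eq_sub_iff_add_eq]
        have h6 := hu n
        rw [hLapp] at h6
        simpa using h6
      have hAl : Filter.Tendsto (fun n => Aext D Aop ((u n : ℋ))) Filter.atTop
          (nhds (y - μ • w)) := by
        simp only [hAu]
        exact hlim.sub (hw.const_smul μ)
      obtain ⟨hwD, hwA⟩ := closed_graph hA (fun n => ((u n : ℋ))) (fun n => (u n).2)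
        w (y - μ • w) hw hAl
      refine ⟨⟨w, hwD⟩, ?_⟩
      rw [hLapp]
      have h7 : Aop ⟨w, hwD⟩ = y - μ • w := by rw [← Aext_of_mem hwD]; exact hwA
      rw [h7]
      simp
    have hbot : Sᗮ = ⊥ := by
      rw [Submodule.eq_bot_iff]
      intro v hv
      rw [Submodule.mem_orthogonal] at hv
      have hkey : ∀ u : ↥D, (inner ℂ (Aop u) v : ℂ) = inner ℂ ((u : ℋ)) (μ • v) := by
        intro u
        have h0 : (inner ℂ (L u) v : ℂ) = 0 := hv (L u) (LinearMap.mem_range_self L u)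
        rw [hLapp, inner_add_left, inner_smul_left, hμconj] at h0
        rw [inner_smul_right]
        linear_combination h0
      have hvD : v ∈ D := hA.2.2 v (μ • v) hkey
      have hvA : Aext D Aop v = μ • v := by
        apply dense_eq hA
        intro z hz
        have h1 := symm' hA hz hvD
        have h2 := hkey ⟨z, hz⟩
        rw [Aext_of_mem hz] at h1
        rw [← h1]
        simpa using h2
      have him : (inner ℂ (Aext D Aop v) v : ℂ).im = 0 := by
        rw [Aext_of_mem hvD]
        exact hreal ⟨v, hvD⟩
      have hinner : (inner ℂ v v : ℂ) = ((‖v‖ : ℂ)) ^ 2 :=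
        inner_self_eq_norm_sq_to_K (𝕜 := ℂ) v
      rw [hvA, inner_smul_left, hμconj, hinner] at him
      have h8 : ((-μ) * ((‖v‖ : ℂ)) ^ 2).im = -(((m:ℝ) + 1) * ‖v‖ ^ 2) := by
        rw [Complex.mul_im]
        simp [hμim, hμre, ← Complex.ofReal_pow]
        ring
      rw [h8] at him
      have h9 : ‖v‖ ^ 2 = 0 := by nlinarith [Nat.cast_nonneg (α := ℝ) m]
      have : ‖v‖ = 0 := by nlinarith [norm_nonneg v]
      exact norm_eq_zero.mp this
    have hStop : S = ⊤ := by
      have h1 : S.topologicalClosure = ⊤ := Submodule.topologicalClosure_eq_top_iff.mpr hbot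
      rwa [IsClosed.submodule_topologicalClosure_eq hclosed] at h1
    exact LinearMap.range_eq_top.mp hStop
  set e := LinearEquiv.ofBijective L ⟨hinj, hsurj⟩ with he
  have heL : ∀ u : ↥D, e u = L u := fun u => rfl
  set Rhat : ℋ →ₗ[ℂ] ℋ := D.subtype ∘ₗ (e.symm : ℋ →ₗ[ℂ] ↥D) with hRhat
  have hRapp : ∀ y, Rhat y = ((e.symm y : ↥D) : ℋ) := fun y => rfl
  have hbound : ∀ y, ‖Rhat y‖ ≤ (1 / ((m:ℝ)+1)) * ‖y‖ := by
    intro y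
    have h1 := hlow (e.symm y)
    have h2 : L (e.symm y) = y := by
      have := e.apply_symm_apply y
      rwa [heL] at this
    rw [h2] at h1
    rw [hRapp]
    have hm : (0:ℝ) < (m:ℝ)+1 := by positivity
    rw [div_mul_eq_mul_div, le_div_iff₀ hm]
    linarith
  set R : ℋ →L[ℂ] ℋ := LinearMap.mkContinuous Rhat (1/((m:ℝ)+1)) hbound with hR
  have hRapp' : ∀ y, R y = ((e.symm y : ↥D) : ℋ) := fun y => rfl
  have hRD : ∀ y, R y ∈ D := fun y => by rw [hRapp']; exact (e.symm y).2
  have hLR : ∀ y, Aext D Aop (R y) = y - μ • R y := by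
    intro y
    have h2 : L (e.symm y) = y := by
      have := e.apply_symm_apply y
      rwa [heL] at this
    rw [hLapp] at h2
    have h3 : Aext D Aop (R y) = Aop (e.symm y) := by
      rw [hRapp', Aext_of_mem (e.symm y).2]
    rw [h3, eq_sub_iff_add_eq, hRapp']
    exact h2
  have hRL : ∀ ξ, ξ ∈ D → R (Aext D Aop ξ) = ξ - μ • R ξ := by
    intro ξ hξ
    have h2 : e.symm (L ⟨ξ, hξ⟩) = ⟨ξ, hξ⟩ := by
      have := e.symm_apply_apply ⟨ξ, hξ⟩
      rwa [heL] at this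
    have h3 : R (Aext D Aop ξ + μ • ξ) = ξ := by
      rw [hRapp']
      rw [hLapp] at h2
      rw [show Aop ⟨ξ, hξ⟩ = Aext D Aop ξ from (Aext_of_mem hξ).symm] at h2
      rw [h2]
    have h4 : R (Aext D Aop ξ) + μ • R ξ = ξ := by
      rw [← map_smul, ← map_add] ; exact h3
    exact eq_sub_of_add_eq h4
  set J : ℋ →L[ℂ] ℋ := μ • R with hJ
  have hJapp : ∀ y, J y = μ • R y := fun y => rfl
  refine ⟨J, fun y => by rw [hJapp]; exact D.smul_mem μ (hRD y), ?_, ?_, ?_⟩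
  · intro ξ hξ
    rw [hJapp, hJapp, Aext_smul' μ (hRD ξ), hLR ξ, hRL ξ hξ]
  · intro y
    rw [hJapp, norm_smul, hμnorm]
    have h1 := hbound y
    rw [show Rhat y = R y from rfl] at h1
    have hm : (0:ℝ) < (m:ℝ)+1 := by positivity
    calc ((m:ℝ)+1) * ‖R y‖ ≤ ((m:ℝ)+1) * ((1/((m:ℝ)+1)) * ‖y‖) := by
          apply mul_le_mul_of_nonneg_left h1 (le_of_lt hm)
      _ = ‖y‖ := by field_simp
  · intro ξ hξ
    have h1 : J ξ - ξ = -(R (Aext D Aop ξ)) := by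
      rw [hJapp, hRL ξ hξ]
      abel
    rw [h1, norm_neg]
    have h2 := hbound (Aext D Aop ξ)
    rw [show Rhat (Aext D Aop ξ) = R (Aext D Aop ξ) from rfl] at h2
    exact h2

end SA


section Basic

variable {D : Submodule ℂ ℋ} {Aop : ↥D →ₗ[ℂ] ℋ}

lemma Aext_add' {x y : ℋ} (hx : x ∈ D) (hy : y ∈ D) :
    Aext D Aop (x + y) = Aext D Aop x + Aext D Aop y := by
  rw [Aext_of_mem hx, Aext_of_mem hy, Aext_of_mem (D.add_mem hx hy), ← map_add]
  rfl

lemma Aext_sub {x y : ℋ} (hx : x ∈ D) (hy : y ∈ D) :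
    Aext D Aop (x - y) = Aext D Aop x - Aext D Aop y := by
  rw [Aext_of_mem hx, Aext_of_mem hy, Aext_of_mem (D.sub_mem hx hy), ← map_sub]
  rfl

lemma Aext_neg' {x : ℋ} (hx : x ∈ D) : Aext D Aop (-x) = -Aext D Aop x := by
  have := Aext_smul' (Aop := Aop) (-1 : ℂ) hx
  simpa using this

lemma mem_domPow_mono {m n : ℕ} (h : m ≤ n) {ψ : ℋ} (hψ : ψ ∈ domPow D Aop n) :
    ψ ∈ domPow D Aop m := fun k hk => hψ k (hk.trans_le h)

lemma mem_of_mem_domPow_succ {n : ℕ} {ψ : ℋ} (hψ : ψ ∈ domPow D Aop (n + 1)) : ψ ∈ D := by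
  simpa using hψ 0 (Nat.succ_pos n)

lemma Aext_mem_domPow {n : ℕ} {ψ : ℋ} (hψ : ψ ∈ domPow D Aop (n + 1)) :
    Aext D Aop ψ ∈ domPow D Aop n := by
  intro k hk
  have := hψ (k + 1) (Nat.succ_lt_succ hk)
  simpa [Function.iterate_succ_apply] using this

lemma commForm_zero (X : ℋ →L[ℂ] ℋ) (ξ η : ℋ) :
    commForm D Aop X 0 ξ η = (inner ℂ (X ξ) η : ℂ) := by
  simp [commForm]

end Basic


section Pascal

variable (D : Submodule ℂ ℋ) (Aop : ↥D →ₗ[ℂ] ℋ)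

lemma commForm_succ (X : ℋ →L[ℂ] ℋ) (n : ℕ) (ξ η : ℋ) :
    commForm D Aop X (n + 1) ξ η =
      commForm D Aop X n ξ (Aext D Aop η) - commForm D Aop X n (Aext D Aop ξ) η := by
  set T := Aext D Aop with hT
  set F : ℕ → ℂ := fun k => (-1) ^ k * (inner ℂ (X (T^[k] ξ)) (T^[n + 1 - k] η) : ℂ) with hF
  have hL : commForm D Aop X (n + 1) ξ η
      = ∑ k ∈ Finset.range (n + 2), ((n + 1).choose k : ℂ) * F k := by
    unfold commForm
    exact Finset.sum_congr rfl fun k hk => by rw [hF, mul_assoc]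
  have hR1 : commForm D Aop X n ξ (T η)
      = ∑ k ∈ Finset.range (n + 1), (n.choose k : ℂ) * F k := by
    unfold commForm
    refine Finset.sum_congr rfl fun k hk => ?_
    have hk' : k ≤ n := Nat.lt_succ_iff.mp (Finset.mem_range.mp hk)
    have h2 : T^[n - k] (T η) = T^[n + 1 - k] η := by
      rw [← Function.iterate_succ_apply]
      congr 1
      omega
    rw [hF, mul_assoc, h2]
  have hR2 : commForm D Aop X n (T ξ) η
      = ∑ k ∈ Finset.range (n + 1), -((n.choose k : ℂ) * F (k + 1)) := by
    unfold commForm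
    refine Finset.sum_congr rfl fun k hk => ?_
    have hk' : k ≤ n := Nat.lt_succ_iff.mp (Finset.mem_range.mp hk)
    have h2 : T^[k] (T ξ) = T^[k + 1] ξ := (Function.iterate_succ_apply T k ξ).symm
    have h3 : n + 1 - (k + 1) = n - k := by omega
    rw [hF, h2]
    simp only [h3, pow_succ]
    ring
  rw [hL, hR1, hR2, Finset.sum_neg_distrib, sub_neg_eq_add]
  rw [Finset.sum_range_succ' (fun k => ((n + 1).choose k : ℂ) * F k) (n + 1)]
  have hch : ∀ k, (((n + 1).choose (k + 1) : ℕ) : ℂ) = (n.choose k : ℂ) + (n.choose (k + 1) : ℂ) := by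
    intro k
    rw [Nat.choose_succ_succ]
    push_cast
    ring
  have : ∑ k ∈ Finset.range (n + 1), ((n + 1).choose (k + 1) : ℂ) * F (k + 1)
      = ∑ k ∈ Finset.range (n + 1), ((n.choose k : ℂ) * F (k + 1) + (n.choose (k + 1) : ℂ) * F (k + 1)) := by
    refine Finset.sum_congr rfl fun k hk => ?_
    rw [hch k, add_mul]
  rw [this, Finset.sum_add_distrib]
  have h4 : ∑ k ∈ Finset.range (n + 1), (n.choose (k + 1) : ℂ) * F (k + 1)
      = ∑ k ∈ Finset.range n, (n.choose (k + 1) : ℂ) * F (k + 1) := by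
    rw [Finset.sum_range_succ]
    simp
  have h5 : ∑ k ∈ Finset.range (n + 1), (n.choose k : ℂ) * F k
      = ∑ k ∈ Finset.range n, (n.choose (k + 1) : ℂ) * F (k + 1) + (n.choose 0 : ℂ) * F 0 := by
    rw [Finset.sum_range_succ' (fun k => (n.choose k : ℂ) * F k) n]
  rw [h4, h5]
  simp only [Nat.add_comm 1 n, Nat.choose_zero_right, Nat.cast_one]
  ring

end Pascal

section JIter

variable {D : Submodule ℂ ℋ} {Aop : ↥D →ₗ[ℂ] ℋ} {J : ℋ →L[ℂ] ℋ}

lemma mem_domPow_one {ψ : ℋ} : ψ ∈ domPow D Aop 1 ↔ ψ ∈ D := by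
  constructor
  · intro h; simpa using h 0 one_pos
  · intro h k hk; interval_cases k; simpa using h

lemma J_iter_comm (hJD : ∀ y, J y ∈ D)
    (hJcomm : ∀ ξ ∈ D, Aext D Aop (J ξ) = J (Aext D Aop ξ))
    {j : ℕ} {ψ : ℋ} (hψ : ψ ∈ domPow D Aop j) :
    ∀ i ≤ j, (Aext D Aop)^[i] (J ψ) = J ((Aext D Aop)^[i] ψ) := by
  intro i hi
  induction i with
  | zero => simp
  | succ i ih =>
    rw [Function.iterate_succ_apply', ih (Nat.le_of_succ_le hi),
      hJcomm _ (hψ i (Nat.lt_of_succ_le hi)), Function.iterate_succ_apply']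

lemma J_mem_domPow (hJD : ∀ y, J y ∈ D)
    (hJcomm : ∀ ξ ∈ D, Aext D Aop (J ξ) = J (Aext D Aop ξ))
    {j : ℕ} {ψ : ℋ} (hψ : ψ ∈ domPow D Aop j) : J ψ ∈ domPow D Aop (j + 1) := by
  intro i hi
  rw [J_iter_comm hJD hJcomm hψ i (Nat.lt_succ_iff.mp hi)]
  exact hJD _

/-- Iterates of `J` map `D` into `domPow (k+1)` and commute with `A`. -/
lemma J_pow_mem (hJD : ∀ y, J y ∈ D)
    (hJcomm : ∀ ξ ∈ D, Aext D Aop (J ξ) = J (Aext D Aop ξ))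
    (k : ℕ) {ξ : ℋ} (hξ : ξ ∈ D) :
    (⇑J)^[k] ξ ∈ domPow D Aop (k + 1) ∧
      Aext D Aop ((⇑J)^[k] ξ) = (⇑J)^[k] (Aext D Aop ξ) := by
  induction k with
  | zero =>
    refine ⟨?_, rfl⟩
    intro i hi; interval_cases i; simpa using hξ
  | succ k ih =>
    obtain ⟨h1, h2⟩ := ih
    constructor
    · rw [Function.iterate_succ_apply']
      exact J_mem_domPow hJD hJcomm h1
    · rw [Function.iterate_succ_apply', Function.iterate_succ_apply']
      have hmem : (⇑J)^[k] ξ ∈ D := by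
        have := h1 0 (Nat.succ_pos k); simpa using this
      rw [hJcomm _ hmem, h2]

lemma iter_norm_le (hJle : ∀ y, ‖J y‖ ≤ ‖y‖) (k : ℕ) (y : ℋ) :
    ‖(⇑J)^[k] y‖ ≤ ‖y‖ := by
  induction k with
  | zero => simp
  | succ k ih =>
    rw [Function.iterate_succ_apply']
    exact (hJle _).trans ih

lemma iter_sub (k : ℕ) (a b : ℋ) :
    (⇑J)^[k] (a - b) = (⇑J)^[k] a - (⇑J)^[k] b := by
  induction k with
  | zero => simp
  | succ k ih =>
    rw [Function.iterate_succ_apply', Function.iterate_succ_apply',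
      Function.iterate_succ_apply', ih, map_sub]

lemma iter_close (hJle : ∀ y, ‖J y‖ ≤ ‖y‖) {c : ℝ}
    (hc : ∀ ξ ∈ D, ‖J ξ - ξ‖ ≤ c * ‖Aext D Aop ξ‖)
    (k : ℕ) {ξ : ℋ} (hξ : ξ ∈ D) :
    ‖(⇑J)^[k] ξ - ξ‖ ≤ k * (c * ‖Aext D Aop ξ‖) := by
  induction k with
  | zero => simp
  | succ k ih =>
    rw [Function.iterate_succ_apply']
    calc ‖J ((⇑J)^[k] ξ) - ξ‖
        ≤ ‖J ((⇑J)^[k] ξ) - J ξ‖ + ‖J ξ - ξ‖ := by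
          have : J ((⇑J)^[k] ξ) - ξ = (J ((⇑J)^[k] ξ) - J ξ) + (J ξ - ξ) := by abel
          rw [this]; exact norm_add_le _ _
      _ ≤ ‖(⇑J)^[k] ξ - ξ‖ + c * ‖Aext D Aop ξ‖ := by
          have h1 : J ((⇑J)^[k] ξ) - J ξ = J ((⇑J)^[k] ξ - ξ) := (map_sub J _ _).symm
          rw [h1]
          exact add_le_add ((hJle _).trans (le_refl _)) (hc ξ hξ)
      _ ≤ k * (c * ‖Aext D Aop ξ‖) + c * ‖Aext D Aop ξ‖ := by
          exact add_le_add ih le_rfl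
      _ = (k + 1 : ℕ) * (c * ‖Aext D Aop ξ‖) := by push_cast; ring

/-- Strong convergence of iterated regularizations. -/
lemma J_strong_conv (hdense : Dense (D : Set ℋ)) (Jf : ℕ → ℋ →L[ℂ] ℋ)
    (hJle : ∀ m y, ‖Jf m y‖ ≤ ‖y‖)
    (hclose : ∀ m, ∀ ξ ∈ D, ‖Jf m ξ - ξ‖ ≤ (1 / (m + 1 : ℝ)) * ‖Aext D Aop ξ‖)
    (k : ℕ) (z : ℋ) :
    Filter.Tendsto (fun m => (⇑(Jf m))^[k] z) Filter.atTop (nhds z) := by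
  rw [Metric.tendsto_atTop]
  intro ε hε
  obtain ⟨ξ, hξD, hξz⟩ : ∃ ξ ∈ (D : Set ℋ), dist z ξ < ε / 3 := by
    have := hdense z
    rw [Metric.mem_closure_iff] at this
    exact this (ε / 3) (by linarith)
  obtain ⟨N, hN⟩ := exists_nat_gt (3 * (k * ‖Aext D Aop ξ‖) / ε)
  refine ⟨N, fun m hm => ?_⟩
  have hd : ‖z - ξ‖ < ε / 3 := by rwa [← dist_eq_norm]
  have h1 : ‖(⇑(Jf m))^[k] z - (⇑(Jf m))^[k] ξ‖ ≤ ‖z - ξ‖ := by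
    rw [← iter_sub]
    exact iter_norm_le (hJle m) k _
  have h2 : ‖(⇑(Jf m))^[k] ξ - ξ‖ ≤ k * ((1 / (m + 1 : ℝ)) * ‖Aext D Aop ξ‖) :=
    iter_close (hJle m) (hclose m) k hξD
  have h3 : (k : ℝ) * ((1 / (m + 1 : ℝ)) * ‖Aext D Aop ξ‖) < ε / 3 := by
    have hm1 : (N : ℝ) ≤ m := Nat.cast_le.mpr hm
    have hmpos : (0:ℝ) < m + 1 := by positivity
    have hNpos : (0:ℝ) ≤ N := Nat.cast_nonneg N
    rw [div_lt_iff₀ (by linarith : (0:ℝ) < ε)] at hN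
    have hkA : (0:ℝ) ≤ (k:ℝ) * ‖Aext D Aop ξ‖ := by positivity
    rw [lt_div_iff₀ (by norm_num : (0:ℝ) < 3)]
    calc (k : ℝ) * ((1 / (m + 1 : ℝ)) * ‖Aext D Aop ξ‖) * 3
        = 3 * ((k:ℝ) * ‖Aext D Aop ξ‖) / (m + 1) := by field_simp
      _ ≤ 3 * ((k:ℝ) * ‖Aext D Aop ξ‖) / (N + 1) := by
          apply div_le_div_of_nonneg_left _ (by positivity) (by linarith)
          · positivity
      _ < ε := by
          rw [div_lt_iff₀ (by positivity : (0:ℝ) < (N:ℝ) + 1)]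
          nlinarith
  rw [dist_eq_norm]
  calc ‖(⇑(Jf m))^[k] z - z‖
      ≤ ‖(⇑(Jf m))^[k] z - (⇑(Jf m))^[k] ξ‖ + ‖(⇑(Jf m))^[k] ξ - ξ‖ + ‖ξ - z‖ := by
        have : (⇑(Jf m))^[k] z - z = ((⇑(Jf m))^[k] z - (⇑(Jf m))^[k] ξ)
            + ((⇑(Jf m))^[k] ξ - ξ) + (ξ - z) := by abel
        rw [this]
        exact (norm_add_le _ _).trans (add_le_add (norm_add_le _ _) le_rfl)
    _ < ε / 3 + ε / 3 + ε / 3 := by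
        have h4 : ‖ξ - z‖ < ε / 3 := by rw [norm_sub_rev]; exact hd
        have := h1.trans_lt hd
        apply add_lt_add (add_lt_add this (h2.trans_lt h3)) h4
    _ = ε := by ring

end JIter


section Chains

variable {D : Submodule ℂ ℋ} {Aop : ↥D →ₗ[ℂ] ℋ}

/-- A (finite) chain of iterated commutators of a bounded operator with `A`:
`c k` maps `D` to `D` and `A (c k ξ) = c (k+1) ξ + c k (A ξ)` on `D`. -/
def IsChainN (D : Submodule ℂ ℋ) (Aop : ↥D →ₗ[ℂ] ℋ) (n : ℕ) (c : ℕ → ℋ →L[ℂ] ℋ) : Prop :=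
  ∀ k, k < n → (∀ ξ ∈ D, c k ξ ∈ D) ∧
    ∀ ξ ∈ D, Aext D Aop (c k ξ) = c (k + 1) ξ + c k (Aext D Aop ξ)

lemma symmAext (hsymm : ∀ u v : ↥D, (inner ℂ (Aop u) (v : ℋ) : ℂ) = inner ℂ (u : ℋ) (Aop v))
    {x y : ℋ} (hx : x ∈ D) (hy : y ∈ D) :
    (inner ℂ (Aext D Aop x) y : ℂ) = inner ℂ x (Aext D Aop y) := by
  rw [Aext_of_mem hx, Aext_of_mem hy]
  exact hsymm ⟨x, hx⟩ ⟨y, hy⟩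

/-- A chain gives representations of all the commutator forms (only symmetry needed). -/
lemma chain_to_ad (hsymm : ∀ u v : ↥D, (inner ℂ (Aop u) (v : ℋ) : ℂ) = inner ℂ (u : ℋ) (Aop v))
    {n : ℕ} {c : ℕ → ℋ →L[ℂ] ℋ} (hc : IsChainN D Aop n c) :
    ∀ k, k ≤ n → AdExistsN D Aop k (c 0) (c k) := by
  intro k
  induction k with
  | zero =>
    intro _ ξ _ η _
    rw [commForm_zero]
  | succ k ih =>
    intro hk1 ξ hξ η hη
    have hk : k < n := Nat.lt_of_succ_le hk1
    have hξk : ξ ∈ domPow D Aop k := mem_domPow_mono (Nat.le_succ k) hξ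
    have hηk : η ∈ domPow D Aop k := mem_domPow_mono (Nat.le_succ k) hη
    have hAξ : Aext D Aop ξ ∈ domPow D Aop k := Aext_mem_domPow hξ
    have hAη : Aext D Aop η ∈ domPow D Aop k := Aext_mem_domPow hη
    have hξD : ξ ∈ D := mem_of_mem_domPow_succ hξ
    have hηD : η ∈ D := mem_of_mem_domPow_succ hη
    rw [commForm_succ, ih (Nat.le_of_succ_le hk1) ξ hξk (Aext D Aop η) hAη,
      ih (Nat.le_of_succ_le hk1) (Aext D Aop ξ) hAξ η hηk]
    have hckD : c k ξ ∈ D := (hc k hk).1 ξ hξD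
    have hsy : (inner ℂ (c k ξ) (Aext D Aop η) : ℂ) = inner ℂ (Aext D Aop (c k ξ)) η :=
      (symmAext hsymm hckD hηD).symm
    rw [hsy, (hc k hk).2 ξ hξD, inner_add_left]
    ring

/-- Key extension: a pair of consecutive commutator representations satisfies the
first-order commutation relation on all of `D` (not just on `Dom A^{k+1}`). -/
lemma key_ext (hA : IsSelfAdjointOp D Aop) {k : ℕ} {X Zk Zk1 : ℋ →L[ℂ] ℋ}
    (hk : AdExistsN D Aop k X Zk) (hk1 : AdExistsN D Aop (k + 1) X Zk1) :
    ∀ ξ ∈ D, ∀ η ∈ D, (inner ℂ (Zk1 ξ) η : ℂ)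
      = inner ℂ (Zk ξ) (Aext D Aop η) - inner ℂ (Zk (Aext D Aop ξ)) η := by
  have stepA : ∀ u ∈ domPow D Aop (k + 1), ∀ v ∈ domPow D Aop (k + 1),
      (inner ℂ (Zk1 u) v : ℂ)
        = inner ℂ (Zk u) (Aext D Aop v) - inner ℂ (Zk (Aext D Aop u)) v := by
    intro u hu v hv
    rw [← hk1 u hu v hv, commForm_succ,
      hk u (mem_domPow_mono (Nat.le_succ k) hu) (Aext D Aop v) (Aext_mem_domPow hv),
      hk (Aext D Aop u) (Aext_mem_domPow hu) v (mem_domPow_mono (Nat.le_succ k) hv)]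
  have hJ := fun m => J_exists hA m
  choose Jf hJD hJcomm hJle hJclose using hJ
  intro ξ hξ η hη
  set u : ℕ → ℋ := fun m => (⇑(Jf m))^[k] ξ with hu_def
  set v : ℕ → ℋ := fun m => (⇑(Jf m))^[k] η with hv_def
  have hu_mem : ∀ m, u m ∈ domPow D Aop (k + 1) :=
    fun m => (J_pow_mem (hJD m) (hJcomm m) k hξ).1
  have hv_mem : ∀ m, v m ∈ domPow D Aop (k + 1) :=
    fun m => (J_pow_mem (hJD m) (hJcomm m) k hη).1
  have hu_A : ∀ m, Aext D Aop (u m) = (⇑(Jf m))^[k] (Aext D Aop ξ) :=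
    fun m => (J_pow_mem (hJD m) (hJcomm m) k hξ).2
  have hv_A : ∀ m, Aext D Aop (v m) = (⇑(Jf m))^[k] (Aext D Aop η) :=
    fun m => (J_pow_mem (hJD m) (hJcomm m) k hη).2
  have hcu : Filter.Tendsto u Filter.atTop (nhds ξ) :=
    J_strong_conv hA.1 Jf hJle hJclose k ξ
  have hcv : Filter.Tendsto v Filter.atTop (nhds η) :=
    J_strong_conv hA.1 Jf hJle hJclose k η
  have hcAu : Filter.Tendsto (fun m => Aext D Aop (u m)) Filter.atTop
      (nhds (Aext D Aop ξ)) := by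
    simp only [hu_A]
    exact J_strong_conv hA.1 Jf hJle hJclose k (Aext D Aop ξ)
  have hcAv : Filter.Tendsto (fun m => Aext D Aop (v m)) Filter.atTop
      (nhds (Aext D Aop η)) := by
    simp only [hv_A]
    exact J_strong_conv hA.1 Jf hJle hJclose k (Aext D Aop η)
  have hZcu : Filter.Tendsto (fun m => Zk1 (u m)) Filter.atTop (nhds (Zk1 ξ)) :=
    (Zk1.continuous.tendsto ξ).comp hcu
  have hlhs : Filter.Tendsto (fun m => (inner ℂ (Zk1 (u m)) (v m) : ℂ)) Filter.atTop
      (nhds (inner ℂ (Zk1 ξ) η)) := Filter.Tendsto.inner hZcu hcv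
  have hrhs : Filter.Tendsto
      (fun m => (inner ℂ (Zk (u m)) (Aext D Aop (v m)) : ℂ)
        - inner ℂ (Zk (Aext D Aop (u m))) (v m)) Filter.atTop
      (nhds ((inner ℂ (Zk ξ) (Aext D Aop η) : ℂ) - inner ℂ (Zk (Aext D Aop ξ)) η)) := by
    apply Filter.Tendsto.sub
    · exact Filter.Tendsto.inner ((Zk.continuous.tendsto ξ).comp hcu) hcAv
    · exact Filter.Tendsto.inner ((Zk.continuous.tendsto _).comp hcAu) hcv
  have heq : (fun m => (inner ℂ (Zk1 (u m)) (v m) : ℂ))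
      = fun m => (inner ℂ (Zk (u m)) (Aext D Aop (v m)) : ℂ)
        - inner ℂ (Zk (Aext D Aop (u m))) (v m) :=
    funext fun m => stepA (u m) (hu_mem m) (v m) (hv_mem m)
  rw [heq] at hlhs
  exact tendsto_nhds_unique hlhs hrhs

/-- From the first-order relation on `D` to the operator identities (using maximality). -/
lemma rep_preserve (hA : IsSelfAdjointOp D Aop) {X Z : ℋ →L[ℂ] ℋ}
    (hrep : ∀ ξ ∈ D, ∀ η ∈ D, (inner ℂ (Z ξ) η : ℂ)
      = inner ℂ (X ξ) (Aext D Aop η) - inner ℂ (X (Aext D Aop ξ)) η) :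
    ∀ ξ ∈ D, X ξ ∈ D ∧ Aext D Aop (X ξ) = Z ξ + X (Aext D Aop ξ) := by
  intro ξ hξ
  have key : ∀ u : ↥D, (inner ℂ (Aop u) (X ξ) : ℂ)
      = inner ℂ (u : ℋ) (Z ξ + X (Aext D Aop ξ)) := by
    intro u
    have h1 := hrep ξ hξ (u : ℋ) u.2
    have h2 : (inner ℂ (X ξ) (Aext D Aop (u : ℋ)) : ℂ)
        = inner ℂ (Z ξ + X (Aext D Aop ξ)) (u : ℋ) := by
      rw [inner_add_left]
      linear_combination -h1
    have h3 := congrArg (starRingEnd ℂ) h2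
    rw [inner_conj_symm, inner_conj_symm] at h3
    rw [Aext_of_mem u.2] at h3
    exact h3
  have hXD : X ξ ∈ D := hA.2.2 _ _ key
  refine ⟨hXD, dense_eq hA fun z hz => ?_⟩
  have h1 := symm' hA hz hXD
  have h2 := key ⟨z, hz⟩
  rw [Aext_of_mem hz] at h1
  rw [← h1]
  simpa using h2

/-- Lemma 1: commutator-form witnesses form a chain. -/
lemma witnesses_to_chain (hA : IsSelfAdjointOp D Aop) {n : ℕ} {X : ℋ →L[ℂ] ℋ}
    {Z : ℕ → ℋ →L[ℂ] ℋ} (hZ : ∀ k, k ≤ n → AdExistsN D Aop k X (Z k)) :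
    IsChainN D Aop n Z := by
  intro k hk
  have hrep := key_ext hA (hZ k (le_of_lt hk)) (hZ (k + 1) hk)
  exact ⟨fun ξ hξ => (rep_preserve hA hrep ξ hξ).1,
    fun ξ hξ => (rep_preserve hA hrep ξ hξ).2⟩

lemma ad_zero_eq {X Z : ℋ →L[ℂ] ℋ} (hZ : AdExistsN D Aop 0 X Z) : Z = X := by
  ext ξ
  apply ext_inner_right ℂ
  intro η
  have h := hZ ξ (fun k hk => absurd hk (Nat.not_lt_zero k))
    η (fun k hk => absurd hk (Nat.not_lt_zero k))
  rw [commForm_zero] at h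
  exact h.symm

end Chains


section ChainAlgebra

variable {D : Submodule ℂ ℋ} {Aop : ↥D →ₗ[ℂ] ℋ}

lemma Aext_zero : Aext D Aop (0 : ℋ) = 0 := by
  rw [Aext_of_mem D.zero_mem]
  exact map_zero Aop

lemma Aext_sum {ι : Type*} (s : Finset ι) (f : ι → ℋ) (hf : ∀ i ∈ s, f i ∈ D) :
    Aext D Aop (∑ i ∈ s, f i) = ∑ i ∈ s, Aext D Aop (f i) := by
  classical
  induction s using Finset.cons_induction with
  | empty => simpa using Aext_zero
  | cons a s ha ih =>
    rw [Finset.sum_cons, Finset.sum_cons,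
      Aext_add' (hf a (Finset.mem_cons_self a s))
        (Submodule.sum_mem D fun i hi => hf i (Finset.mem_cons_of_mem hi)),
      ih fun i hi => hf i (Finset.mem_cons_of_mem hi)]

lemma pascal_smul {M : Type*} [AddCommMonoid M] [Module ℂ M] (G : ℕ → M) (j : ℕ) :
    ∑ i ∈ Finset.range (j + 2), (((j + 1).choose i : ℂ)) • G i
      = ∑ i ∈ Finset.range (j + 1), ((j.choose i : ℂ)) • G i
        + ∑ i ∈ Finset.range (j + 1), ((j.choose i : ℂ)) • G (i + 1) := by
  rw [Finset.sum_range_succ' (fun i => (((j + 1).choose i : ℂ)) • G i) (j + 1)]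
  have h1 : ∀ i, (((j + 1).choose (i + 1) : ℕ) : ℂ) • G (i + 1)
      = ((j.choose i : ℂ)) • G (i + 1) + ((j.choose (i + 1) : ℂ)) • G (i + 1) := by
    intro i
    rw [Nat.choose_succ_succ]
    push_cast
    rw [add_smul]
  rw [Finset.sum_congr rfl fun i _ => h1 i, Finset.sum_add_distrib]
  have h2 : ∑ i ∈ Finset.range (j + 1), ((j.choose (i + 1) : ℂ)) • G (i + 1)
      = ∑ i ∈ Finset.range j, ((j.choose (i + 1) : ℂ)) • G (i + 1) := by
    rw [Finset.sum_range_succ]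
    simp
  have h3 : ∑ i ∈ Finset.range (j + 1), ((j.choose i : ℂ)) • G i
      = ∑ i ∈ Finset.range j, ((j.choose (i + 1) : ℂ)) • G (i + 1)
        + ((j.choose 0 : ℂ)) • G 0 := Finset.sum_range_succ' _ j
  rw [h2, h3]
  simp only [Nat.choose_zero_right, Nat.cast_one, one_smul]
  abel

/-- The Leibniz product family of two chains. -/
noncomputable def prodOp (c₁ c₂ : ℕ → ℋ →L[ℂ] ℋ) (j : ℕ) : ℋ →L[ℂ] ℋ :=
  ∑ i ∈ Finset.range (j + 1), ((j.choose i : ℂ)) • ((c₁ i).comp (c₂ (j - i)))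

lemma prodOp_apply (c₁ c₂ : ℕ → ℋ →L[ℂ] ℋ) (j : ℕ) (ξ : ℋ) :
    prodOp c₁ c₂ j ξ
      = ∑ i ∈ Finset.range (j + 1), ((j.choose i : ℂ)) • (c₁ i ((c₂ (j - i)) ξ)) := by
  simp [prodOp]

lemma IsChainN_add {n : ℕ} {c d : ℕ → ℋ →L[ℂ] ℋ}
    (hc : IsChainN D Aop n c) (hd : IsChainN D Aop n d) :
    IsChainN D Aop n (fun k => c k + d k) := by
  intro k hk
  refine ⟨fun ξ hξ => D.add_mem ((hc k hk).1 ξ hξ) ((hd k hk).1 ξ hξ), fun ξ hξ => ?_⟩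
  simp only [ContinuousLinearMap.add_apply]
  rw [Aext_add' ((hc k hk).1 ξ hξ) ((hd k hk).1 ξ hξ), (hc k hk).2 ξ hξ, (hd k hk).2 ξ hξ]
  abel

lemma IsChainN_sub {n : ℕ} {c d : ℕ → ℋ →L[ℂ] ℋ}
    (hc : IsChainN D Aop n c) (hd : IsChainN D Aop n d) :
    IsChainN D Aop n (fun k => c k - d k) := by
  intro k hk
  refine ⟨fun ξ hξ => D.sub_mem ((hc k hk).1 ξ hξ) ((hd k hk).1 ξ hξ), fun ξ hξ => ?_⟩
  simp only [ContinuousLinearMap.sub_apply]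
  rw [Aext_sub ((hc k hk).1 ξ hξ) ((hd k hk).1 ξ hξ), (hc k hk).2 ξ hξ, (hd k hk).2 ξ hξ]
  abel

lemma IsChainN_neg {n : ℕ} {c : ℕ → ℋ →L[ℂ] ℋ} (hc : IsChainN D Aop n c) :
    IsChainN D Aop n (fun k => -(c k)) := by
  intro k hk
  refine ⟨fun ξ hξ => D.neg_mem ((hc k hk).1 ξ hξ), fun ξ hξ => ?_⟩
  simp only [ContinuousLinearMap.neg_apply]
  rw [Aext_neg' ((hc k hk).1 ξ hξ), (hc k hk).2 ξ hξ]
  abel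

lemma IsChainN_mono {m n : ℕ} (h : m ≤ n) {c : ℕ → ℋ →L[ℂ] ℋ}
    (hc : IsChainN D Aop n c) : IsChainN D Aop m c :=
  fun k hk => hc k (lt_of_lt_of_le hk h)

lemma IsChainN_shift {n : ℕ} {c : ℕ → ℋ →L[ℂ] ℋ} (hc : IsChainN D Aop n c) :
    IsChainN D Aop (n - 1) (fun j => c (j + 1)) := by
  intro k hk
  have := hc (k + 1) (by omega)
  exact ⟨this.1, fun ξ hξ => this.2 ξ hξ⟩

lemma IsChainN_prod {n : ℕ} {c₁ c₂ : ℕ → ℋ →L[ℂ] ℋ}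
    (h1 : IsChainN D Aop n c₁) (h2 : IsChainN D Aop n c₂) :
    IsChainN D Aop n (prodOp c₁ c₂) := by
  intro j hj
  have hmem : ∀ ξ, ξ ∈ D → ∀ i ∈ Finset.range (j + 1),
      ((j.choose i : ℂ)) • (c₁ i ((c₂ (j - i)) ξ)) ∈ D := by
    intro ξ hξ i hi
    have hi' : i ≤ j := Nat.lt_succ_iff.mp (Finset.mem_range.mp hi)
    exact D.smul_mem _ ((h1 i (lt_of_le_of_lt hi' hj)).1 _
      ((h2 (j - i) (lt_of_le_of_lt (Nat.sub_le j i) hj)).1 ξ hξ))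
  constructor
  · intro ξ hξ
    rw [prodOp_apply]
    exact Submodule.sum_mem D (hmem ξ hξ)
  · intro ξ hξ
    rw [prodOp_apply, Aext_sum _ _ (hmem ξ hξ)]
    have hterm : ∀ i ∈ Finset.range (j + 1),
        Aext D Aop (((j.choose i : ℂ)) • (c₁ i ((c₂ (j - i)) ξ)))
          = ((j.choose i : ℂ)) • (c₁ (i + 1) ((c₂ (j - i)) ξ))
            + ((j.choose i : ℂ)) • (c₁ i ((c₂ (j - i + 1)) ξ))
            + ((j.choose i : ℂ)) • (c₁ i ((c₂ (j - i)) (Aext D Aop ξ))) := by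
      intro i hi
      have hi' : i ≤ j := Nat.lt_succ_iff.mp (Finset.mem_range.mp hi)
      have hiN : i < n := lt_of_le_of_lt hi' hj
      have hjiN : j - i < n := lt_of_le_of_lt (Nat.sub_le j i) hj
      have hc2m : (c₂ (j - i)) ξ ∈ D := (h2 (j - i) hjiN).1 ξ hξ
      rw [Aext_smul' _ ((h1 i hiN).1 _ hc2m), (h1 i hiN).2 _ hc2m,
        (h2 (j - i) hjiN).2 ξ hξ, map_add, smul_add, smul_add]
      abel
    rw [Finset.sum_congr rfl hterm, Finset.sum_add_distrib, Finset.sum_add_distrib]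
    have hthird : ∑ i ∈ Finset.range (j + 1),
        ((j.choose i : ℂ)) • (c₁ i ((c₂ (j - i)) (Aext D Aop ξ)))
          = prodOp c₁ c₂ j (Aext D Aop ξ) := (prodOp_apply c₁ c₂ j _).symm
    rw [hthird]
    congr 1
    set G : ℕ → ℋ := fun i => c₁ i ((c₂ (j + 1 - i)) ξ) with hG
    have e1 : ∀ i ∈ Finset.range (j + 1),
        ((j.choose i : ℂ)) • (c₁ (i + 1) ((c₂ (j - i)) ξ)) = ((j.choose i : ℂ)) • G (i + 1) := by
      intro i hi
      have : j + 1 - (i + 1) = j - i := by omega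
      rw [hG]
      simp only [this]
    have e2 : ∀ i ∈ Finset.range (j + 1),
        ((j.choose i : ℂ)) • (c₁ i ((c₂ (j - i + 1)) ξ)) = ((j.choose i : ℂ)) • G i := by
      intro i hi
      have hi' : i ≤ j := Nat.lt_succ_iff.mp (Finset.mem_range.mp hi)
      have : j + 1 - i = j - i + 1 := by omega
      rw [hG]
      simp only [this]
    rw [Finset.sum_congr rfl e1, Finset.sum_congr rfl e2, prodOp_apply]
    have : ∑ i ∈ Finset.range (j + 1 + 1), (((j + 1).choose i : ℂ)) • (c₁ i ((c₂ (j + 1 - i)) ξ))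
        = ∑ i ∈ Finset.range (j + 2), (((j + 1).choose i : ℂ)) • G i := rfl
    rw [this, pascal_smul G j]
    abel

end ChainAlgebra

section Perturb

variable {D : Submodule ℂ ℋ}

/-- The iterated `A₂ = A₁ + B` commutator chains, built from `A₁`-chains. -/
noncomputable def pert (b c : ℕ → ℋ →L[ℂ] ℋ) : ℕ → ℕ → (ℋ →L[ℂ] ℋ)
  | 0 => c
  | (k + 1) => fun j => pert b c k (j + 1) + prodOp b (pert b c k) j - prodOp (pert b c k) b j

variable {A1 A2 : ↥D →ₗ[ℂ] ℋ} {Bop : ℋ →L[ℂ] ℋ} {b c : ℕ → ℋ →L[ℂ] ℋ} {n : ℕ}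

lemma pert_chain (hb : IsChainN D A1 (n - 1) b) (hc : IsChainN D A1 n c) :
    ∀ k, IsChainN D A1 (n - k) (pert b c k) := by
  intro k
  induction k with
  | zero => simpa [pert] using hc
  | succ k ih =>
    have h1 : IsChainN D A1 (n - k - 1) (fun j => pert b c k (j + 1)) := IsChainN_shift ih
    have h2 : IsChainN D A1 (n - k - 1) (prodOp b (pert b c k)) :=
      IsChainN_prod (IsChainN_mono (by omega) hb) (IsChainN_mono (by omega) ih)
    have h3 : IsChainN D A1 (n - k - 1) (prodOp (pert b c k) b) :=
      IsChainN_prod (IsChainN_mono (by omega) ih) (IsChainN_mono (by omega) hb)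
    have h4 : IsChainN D A1 (n - k - 1)
        (fun j => pert b c k (j + 1) + prodOp b (pert b c k) j - prodOp (pert b c k) b j) :=
      IsChainN_sub (IsChainN_add h1 h2) h3
    have hnk : n - (k + 1) = n - k - 1 := by omega
    rw [hnk]
    exact h4

lemma pert_step (hb : IsChainN D A1 (n - 1) b) (hc : IsChainN D A1 n c) (hb0 : b 0 = Bop)
    (hrel : ∀ ξ ∈ D, Aext D A2 ξ = Aext D A1 ξ + Bop ξ) :
    ∀ k, k < n → ∀ ξ ∈ D, Aext D A2 (pert b c k 0 ξ)
      = pert b c (k + 1) 0 ξ + pert b c k 0 (Aext D A2 ξ) := by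
  intro k hk ξ hξ
  have P := pert_chain hb hc
  have h0 : (0 : ℕ) < n - k := by omega
  have hw : pert b c k 0 ξ ∈ D := (P k 0 h0).1 ξ hξ
  rw [hrel _ hw, (P k 0 h0).2 ξ hξ]
  have happ : pert b c (k + 1) 0 ξ
      = pert b c k 1 ξ + Bop (pert b c k 0 ξ) - pert b c k 0 (Bop ξ) := by
    show (pert b c k 1 + prodOp b (pert b c k) 0 - prodOp (pert b c k) b 0) ξ = _
    simp [prodOp, hb0]
  rw [happ, hrel ξ hξ, map_add]
  abel

lemma pert_norm {β M : ℝ} (hβ : ∀ i ≤ n, ‖b i‖ ≤ β) (hM : ∀ j ≤ n, ‖c j‖ ≤ M) :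
    ∀ k, k ≤ n → ∀ j, j ≤ n - k →
      ‖pert b c k j‖ ≤ M * (1 + 2 * β * 2 ^ n) ^ k := by
  have hβ0 : 0 ≤ β := le_trans (norm_nonneg (b 0)) (hβ 0 (Nat.zero_le n))
  have hM0 : 0 ≤ M := le_trans (norm_nonneg (c 0)) (hM 0 (Nat.zero_le n))
  have hL1 : (1 : ℝ) ≤ 1 + 2 * β * 2 ^ n := by nlinarith [pow_pos (by norm_num : (0:ℝ) < 2) n]
  have hprod : ∀ (c₁ c₂ : ℕ → ℋ →L[ℂ] ℋ) (β₁ β₂ : ℝ) (j : ℕ), 0 ≤ β₁ → 0 ≤ β₂ →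
      (∀ i ≤ j, ‖c₁ i‖ ≤ β₁) → (∀ i ≤ j, ‖c₂ i‖ ≤ β₂) →
      ‖prodOp c₁ c₂ j‖ ≤ (2 : ℝ) ^ j * (β₁ * β₂) := by
    intro c₁ c₂ β₁ β₂ j hβ₁ hβ₂ h₁ h₂
    calc ‖prodOp c₁ c₂ j‖
        ≤ ∑ i ∈ Finset.range (j + 1), ‖((j.choose i : ℂ)) • ((c₁ i).comp (c₂ (j - i)))‖ :=
          norm_sum_le _ _
      _ ≤ ∑ i ∈ Finset.range (j + 1), (j.choose i : ℝ) * (β₁ * β₂) := by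
          apply Finset.sum_le_sum
          intro i hi
          have hi' : i ≤ j := Nat.lt_succ_iff.mp (Finset.mem_range.mp hi)
          rw [norm_smul]
          have hco : ‖((j.choose i : ℂ))‖ = (j.choose i : ℝ) := by
            rw [Complex.norm_natCast]
          rw [hco]
          apply mul_le_mul_of_nonneg_left _ (Nat.cast_nonneg _)
          calc ‖(c₁ i).comp (c₂ (j - i))‖ ≤ ‖c₁ i‖ * ‖c₂ (j - i)‖ :=
                ContinuousLinearMap.opNorm_comp_le _ _
            _ ≤ β₁ * β₂ := by
                apply mul_le_mul (h₁ i hi') (h₂ (j - i) (Nat.sub_le j i)) (norm_nonneg _) hβ₁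
      _ = (2 : ℝ) ^ j * (β₁ * β₂) := by
          rw [← Finset.sum_mul]
          congr 1
          rw [show ∑ i ∈ Finset.range (j + 1), (j.choose i : ℝ)
              = ((∑ i ∈ Finset.range (j + 1), j.choose i : ℕ) : ℝ) by push_cast; rfl]
          rw [Nat.sum_range_choose]
          push_cast
          rfl
  intro k
  induction k with
  | zero =>
    intro _ j hj
    simpa [pert] using hM j (by omega)
  | succ k ih =>
    intro hk1 j hj
    have hk : k ≤ n := Nat.le_of_succ_le hk1
    have ihb : ∀ i ≤ n - k, ‖pert b c k i‖ ≤ M * (1 + 2 * β * 2 ^ n) ^ k := ih hk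
    set L := 1 + 2 * β * 2 ^ n with hLdef
    have hMLk : 0 ≤ M * L ^ k := by positivity
    have h2jn : (2:ℝ) ^ j ≤ 2 ^ n := by
      apply pow_le_pow_right₀ (by norm_num)
      omega
    have e1 : ‖pert b c k (j + 1)‖ ≤ M * L ^ k := ihb (j + 1) (by omega)
    have e2 : ‖prodOp b (pert b c k) j‖ ≤ (2:ℝ) ^ j * (β * (M * L ^ k)) :=
      hprod b (pert b c k) β (M * L ^ k) j hβ0 hMLk
        (fun i hi => hβ i (by omega)) (fun i hi => ihb i (by omega))
    have e3 : ‖prodOp (pert b c k) b j‖ ≤ (2:ℝ) ^ j * ((M * L ^ k) * β) :=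
      hprod (pert b c k) b (M * L ^ k) β j hMLk hβ0
        (fun i hi => ihb i (by omega)) (fun i hi => hβ i (by omega))
    have htri : ‖pert b c (k + 1) j‖
        ≤ ‖pert b c k (j + 1)‖ + ‖prodOp b (pert b c k) j‖ + ‖prodOp (pert b c k) b j‖ := by
      show ‖pert b c k (j + 1) + prodOp b (pert b c k) j - prodOp (pert b c k) b j‖ ≤ _
      calc ‖pert b c k (j + 1) + prodOp b (pert b c k) j - prodOp (pert b c k) b j‖
          ≤ ‖pert b c k (j + 1) + prodOp b (pert b c k) j‖ + ‖prodOp (pert b c k) b j‖ :=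
            norm_sub_le _ _
        _ ≤ _ := add_le_add (norm_add_le _ _) le_rfl
    have hpow : (2:ℝ) ^ j * (β * (M * L ^ k)) ≤ 2 ^ n * β * (M * L ^ k) := by
      rw [mul_assoc ((2:ℝ)^n) β]
      apply mul_le_mul_of_nonneg_right h2jn (by positivity)
      |>.trans_eq (by ring) |>.trans (le_refl _)
    calc ‖pert b c (k + 1) j‖
        ≤ M * L ^ k + (2:ℝ) ^ j * (β * (M * L ^ k)) + (2:ℝ) ^ j * ((M * L ^ k) * β) :=
          htri.trans (add_le_add (add_le_add e1 e2) e3)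
      _ ≤ M * L ^ k + (2:ℝ) ^ n * (β * (M * L ^ k)) + (2:ℝ) ^ n * ((M * L ^ k) * β) := by
          have hb1 : (2:ℝ) ^ j * (β * (M * L ^ k)) ≤ (2:ℝ) ^ n * (β * (M * L ^ k)) :=
            mul_le_mul_of_nonneg_right h2jn (by positivity)
          have hb2 : (2:ℝ) ^ j * ((M * L ^ k) * β) ≤ (2:ℝ) ^ n * ((M * L ^ k) * β) :=
            mul_le_mul_of_nonneg_right h2jn (by positivity)
          linarith
      _ = (M * L ^ k) * L := by rw [hLdef]; ring
      _ = M * L ^ (k + 1) := by ring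

end Perturb


section Transfer

variable {D : Submodule ℂ ℋ}

lemma chain_transfer_exists {A1 A2 : ↥D →ₗ[ℂ] ℋ} (p : ℕ)
    (b : ℕ → ℋ →L[ℂ] ℋ) (hb : IsChainN D A1 (p - 1) b)
    (hrel : ∀ ξ ∈ D, Aext D A2 ξ = Aext D A1 ξ + (b 0) ξ) :
    ∃ K : ℝ, ∀ (c : ℕ → ℋ →L[ℂ] ℋ) (M : ℝ), IsChainN D A1 p c → (∀ j ≤ p, ‖c j‖ ≤ M) →
      ∃ c' : ℕ → ℋ →L[ℂ] ℋ, IsChainN D A2 p c' ∧ c' 0 = c 0 ∧ ∀ k ≤ p, ‖c' k‖ ≤ K * M := by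
  set β := ∑ i ∈ Finset.range (p + 1), ‖b i‖ with hβdef
  have hβ : ∀ i ≤ p, ‖b i‖ ≤ β := fun i hi =>
    Finset.single_le_sum (fun j _ => norm_nonneg (b j)) (Finset.mem_range.mpr (by omega))
  have hβ0 : (0:ℝ) ≤ β := Finset.sum_nonneg fun j _ => norm_nonneg _
  set L := 1 + 2 * β * 2 ^ p with hLdef
  have hL1 : (1:ℝ) ≤ L := by
    have : (0:ℝ) < 2 ^ p := pow_pos (by norm_num) p
    nlinarith
  refine ⟨L ^ p, fun c M hc hM => ?_⟩
  have hM0 : (0:ℝ) ≤ M := le_trans (norm_nonneg (c 0)) (hM 0 (Nat.zero_le p))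
  refine ⟨fun k => pert b c k 0, ?_, rfl, ?_⟩
  · intro k hk
    have P := pert_chain hb hc
    exact ⟨fun ξ hξ => (P k 0 (by omega)).1 ξ hξ,
      fun ξ hξ => pert_step hb hc rfl hrel k hk ξ hξ⟩
  · intro k hk
    have h1 := pert_norm hβ hM k hk 0 (by omega)
    calc ‖pert b c k 0‖ ≤ M * L ^ k := h1
      _ ≤ M * L ^ p := by
          apply mul_le_mul_of_nonneg_left (pow_le_pow_right₀ hL1 hk) hM0
      _ = L ^ p * M := by ring

lemma uniform_transfer {A1 A2 : ↥D →ₗ[ℂ] ℋ} (h1 : IsSelfAdjointOp D A1)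
    (h2symm : ∀ u v : ↥D, (inner ℂ (A2 u) (v : ℋ) : ℂ) = inner ℂ (u : ℋ) (A2 v))
    (p : ℕ) (b : ℕ → ℋ →L[ℂ] ℋ) (hb : IsChainN D A1 (p - 1) b)
    (hrel : ∀ ξ ∈ D, Aext D A2 ξ = Aext D A1 ξ + (b 0) ξ) (X : ℝ → ℋ →L[ℂ] ℋ) :
    InCnUniform D A1 p X → InCnUniform D A2 p X := by
  rintro ⟨c0, hc0⟩
  obtain ⟨K, hK⟩ := chain_transfer_exists p b hb hrel
  refine ⟨K * max c0 0, fun t => ?_⟩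
  have hZsel : ∀ k, ∃ Z : ℋ →L[ℂ] ℋ, k ≤ p → (AdExistsN D A1 k (X t) Z ∧ ‖Z‖ ≤ c0) := by
    intro k
    by_cases h : k ≤ p
    · obtain ⟨Z, hZ⟩ := hc0 t k h
      exact ⟨Z, fun _ => hZ⟩
    · exact ⟨0, fun hk => absurd hk h⟩
  choose Z hZ using hZsel
  have hZad : ∀ k, k ≤ p → AdExistsN D A1 k (X t) (Z k) := fun k hk => (hZ k hk).1
  have hchain : IsChainN D A1 p Z := witnesses_to_chain h1 hZad
  have hZ0 : Z 0 = X t := ad_zero_eq (hZad 0 (Nat.zero_le p))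
  have hMb : ∀ j ≤ p, ‖Z j‖ ≤ max c0 0 := fun j hj => le_trans (hZ j hj).2 (le_max_left _ _)
  obtain ⟨c', hc'chain, hc'0, hc'norm⟩ := hK Z (max c0 0) hchain hMb
  intro k hk
  refine ⟨c' k, ?_, hc'norm k hk⟩
  have h := chain_to_ad h2symm hc'chain k hk
  rwa [hc'0, hZ0] at h

end Transfer

/-- if `A` is self-adjoint and `B ∈ C_{p−1}(A)` is bounded Hermitian, then
`A + B` (with domain `Dom A`) is self-adjoint, and an operator-valued function `X(t)` is in
`C_p(A)` uniformly iff it is in `C_p(A+B)` uniformly. -/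
theorem stmt_15 {ℋ : Type*} [NormedAddCommGroup ℋ] [InnerProductSpace ℂ ℋ] [CompleteSpace ℋ]
    (D : Submodule ℂ ℋ) (Aop : ↥D →ₗ[ℂ] ℋ) (hA : IsSelfAdjointOp D Aop)
    (p : ℕ) (hp : 0 < p) (B : ℋ →L[ℂ] ℋ) (hBsa : IsSelfAdjoint B)
    (hBC : InCn D Aop (p - 1) B) (X : ℝ → ℋ →L[ℂ] ℋ) :
    IsSelfAdjointOp D (Aop + B.toLinearMap.comp D.subtype) ∧
      (InCnUniform D Aop p X ↔ InCnUniform D (Aop + B.toLinearMap.comp D.subtype) p X) := by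
  set A2 : ↥D →ₗ[ℂ] ℋ := Aop + B.toLinearMap.comp D.subtype with hA2def
  have hA2app : ∀ u : ↥D, A2 u = Aop u + B (u : ℋ) := fun u => rfl
  have hBinner : ∀ x y : ℋ, (inner ℂ (B x) y : ℂ) = inner ℂ x (B y) := by
    intro x y
    conv_lhs => rw [← hBsa.adjoint_eq]
    exact ContinuousLinearMap.adjoint_inner_left B y x
  have hA2sa : IsSelfAdjointOp D A2 := by
    refine ⟨hA.1, ?_, ?_⟩
    · intro u v
      rw [hA2app, hA2app, inner_add_left, inner_add_right, hA.2.1 u v, hBinner]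
    · intro v w hvw
      apply hA.2.2 v (w - B v)
      intro u
      have h1 := hvw u
      rw [hA2app, inner_add_left, hBinner] at h1
      rw [inner_sub_right]
      linear_combination h1
  have hrel : ∀ ξ ∈ D, Aext D A2 ξ = Aext D Aop ξ + B ξ := by
    intro ξ hξ
    rw [Aext_of_mem (Aop := A2) hξ, Aext_of_mem (Aop := Aop) hξ]
    rfl
  -- a chain for B with respect to A
  have hBsel : ∀ k, ∃ Zb : ℋ →L[ℂ] ℋ, k ≤ p - 1 → AdExistsN D Aop k B Zb := by
    intro k
    by_cases h : k ≤ p - 1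
    · obtain ⟨Zb, hZb⟩ := hBC k h
      exact ⟨Zb, fun _ => hZb⟩
    · exact ⟨0, fun hk => absurd hk h⟩
  choose bw hbw using hBsel
  have hbchain : IsChainN D Aop (p - 1) bw :=
    witnesses_to_chain hA fun k hk => hbw k hk
  have hbw0 : bw 0 = B := ad_zero_eq (hbw 0 (Nat.zero_le _))
  have hrelb : ∀ ξ ∈ D, Aext D A2 ξ = Aext D Aop ξ + (bw 0) ξ := by
    intro ξ hξ
    rw [hbw0]
    exact hrel ξ hξ
  have dir1 : InCnUniform D Aop p X → InCnUniform D A2 p X :=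
    uniform_transfer hA hA2sa.2.1 p bw hbchain hrelb X
  have dir2 : InCnUniform D A2 p X → InCnUniform D Aop p X := by
    obtain ⟨K, hK⟩ := chain_transfer_exists (p - 1) bw
      (IsChainN_mono (by omega) hbchain) hrelb
    set M := ∑ i ∈ Finset.range p, ‖bw i‖ with hMdef
    have hMbw : ∀ j ≤ p - 1, ‖bw j‖ ≤ M := fun j hj =>
      Finset.single_le_sum (fun i _ => norm_nonneg (bw i)) (Finset.mem_range.mpr (by omega))
    obtain ⟨b2, hb2chain, hb2_0, _⟩ := hK bw M hbchain hMbw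
    have hb2neg : IsChainN D A2 (p - 1) (fun k => -(b2 k)) := IsChainN_neg hb2chain
    have hrel2 : ∀ ξ ∈ D, Aext D Aop ξ = Aext D A2 ξ + ((fun k => -(b2 k)) 0) ξ := by
      intro ξ hξ
      rw [hrel ξ hξ]
      simp only [ContinuousLinearMap.neg_apply, hb2_0, hbw0]
      abel
    exact uniform_transfer hA2sa hA.2.1 p (fun k => -(b2 k)) hb2neg hrel2 X
  exact ⟨hA2sa, ⟨dir1, dir2⟩⟩
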